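/- Let A = [a_{ij}] be a k × ℓ transformation matrix with k ≥ 2 and ℓ ≥ 2, and let C and D be copulas. Then ‖[A](C) − [A](D)‖_S ≤ r‖C − D‖_S, where r² = max( Σ_{j=1}^ℓ Σ_{i=1}^k a_{ij}² (q_j − q_{j−1})/(p_i − p_{i−1}), Σ_{j=1}^ℓ Σ_{i=1}^k a_{ij}² (p_i − p_{i−1})/(q_j − q_{j−1}) ), and moreover r < 1. -/

import Mathlib

open Set

noncomputable section

/-- A (bivariate) copula, as a function `C : ℝ × ℝ → ℝ` whose defining properties are imposed
on the unit square `[0,1]²`: `C(u,0) = C(0,v) = 0`, `C(u,1) = u`, `C(1,v) = v`, and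
2-increasingness. -/
def IsCopula (C : ℝ → ℝ → ℝ) : Prop :=
  (∀ u ∈ Icc (0:ℝ) 1, C u 0 = 0) ∧
  (∀ v ∈ Icc (0:ℝ) 1, C 0 v = 0) ∧
  (∀ u ∈ Icc (0:ℝ) 1, C u 1 = u) ∧
  (∀ v ∈ Icc (0:ℝ) 1, C 1 v = v) ∧
  (∀ u₁ u₂ v₁ v₂ : ℝ, u₁ ∈ Icc (0:ℝ) 1 → u₂ ∈ Icc (0:ℝ) 1 → v₁ ∈ Icc (0:ℝ) 1 →
    v₂ ∈ Icc (0:ℝ) 1 → u₁ ≤ u₂ → v₁ ≤ v₂ →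
    0 ≤ C u₂ v₂ - C u₂ v₁ - C u₁ v₂ + C u₁ v₁)

/-- A `k × ℓ` transformation matrix: nonnegative entries summing to `1`, every row and every
column containing a nonzero entry.  (The index `i : Fin k` is the column index and
`j : Fin ℓ` is the row index.) -/
def IsTransfMatrix {k ℓ : ℕ} (a : Fin k → Fin ℓ → ℝ) : Prop :=
  (∀ i j, 0 ≤ a i j) ∧ (∑ i, ∑ j, a i j = 1) ∧
  (∀ j, ∃ i, a i j ≠ 0) ∧ (∀ i, ∃ j, a i j ≠ 0)

/-- `pP a m` is `p_m`: the sum of the entries in the first `m` columns of `a`. -/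
def pP {k ℓ : ℕ} (a : Fin k → Fin ℓ → ℝ) (m : ℕ) : ℝ :=
  ∑ i : Fin k, if (i : ℕ) < m then ∑ j, a i j else 0

/-- `qQ a m` is `q_m`: the sum of the entries in the first `m` rows of `a`. -/
def qQ {k ℓ : ℕ} (a : Fin k → Fin ℓ → ℝ) (m : ℕ) : ℝ :=
  ∑ j : Fin ℓ, if (j : ℕ) < m then ∑ i, a i j else 0

/-- `F_i(u) = min(1, (u − p_{i−1})/Δp_i) · 𝟙_{(p_{i−1},∞)}(u)`, the uniform distribution
function on `[p_{i−1}, p_i]` (here `i : Fin k` denotes the `(i+1)`-st column, so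
`p_{i−1} = pP a i` and `p_i = pP a (i+1)`). -/
def Fdist {k ℓ : ℕ} (a : Fin k → Fin ℓ → ℝ) (i : Fin k) (u : ℝ) : ℝ :=
  if pP a (i : ℕ) < u then min 1 ((u - pP a (i : ℕ)) / (pP a ((i : ℕ) + 1) - pP a (i : ℕ)))
  else 0

/-- `G_j(v) = min(1, (v − q_{j−1})/Δq_j) · 𝟙_{(q_{j−1},∞)}(v)`. -/
def Gdist {k ℓ : ℕ} (a : Fin k → Fin ℓ → ℝ) (j : Fin ℓ) (v : ℝ) : ℝ :=
  if qQ a (j : ℕ) < v then min 1 ((v - qQ a (j : ℕ)) / (qQ a ((j : ℕ) + 1) - qQ a (j : ℕ)))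
  else 0

/-- The patching operator `[A]`: `[A](C)(u,v) = Σ_i Σ_j a_{ij} C(F_i(u), G_j(v))`. -/
def patch {k ℓ : ℕ} (a : Fin k → Fin ℓ → ℝ) (C : ℝ → ℝ → ℝ) : ℝ → ℝ → ℝ :=
  fun u v => ∑ i, ∑ j, a i j * C (Fdist a i u) (Gdist a j v)

/-- First partial derivative `∂₁C` (defined via `deriv`, which agrees a.e. with the
almost-everywhere existing partial derivative of a copula). -/
def d1 (C : ℝ → ℝ → ℝ) (u v : ℝ) : ℝ := deriv (fun x => C x v) u

/-- Second partial derivative `∂₂C`. -/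
def d2 (C : ℝ → ℝ → ℝ) (u v : ℝ) : ℝ := deriv (fun y => C u y) v

/-- `‖C‖₁² = ∫₀¹∫₀¹ |∂₁C(u,v)|² du dv`. -/
def sobSq1 (C : ℝ → ℝ → ℝ) : ℝ := ∫ v in (0:ℝ)..1, ∫ u in (0:ℝ)..1, (d1 C u v) ^ 2

/-- `‖C‖₂² = ∫₀¹∫₀¹ |∂₂C(u,v)|² du dv`. -/
def sobSq2 (C : ℝ → ℝ → ℝ) : ℝ := ∫ v in (0:ℝ)..1, ∫ u in (0:ℝ)..1, (d2 C u v) ^ 2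

/-- The modified Sobolev norm `‖C‖_S = (‖C‖₁² + ‖C‖₂²)^{1/2}`. -/
def sobNorm (C : ℝ → ℝ → ℝ) : ℝ := Real.sqrt (sobSq1 C + sobSq2 C)

/-- Pointwise difference of two bivariate functions. -/
def csub (C D : ℝ → ℝ → ℝ) : ℝ → ℝ → ℝ := fun u v => C u v - D u v

/-- The `*`-product of copulas: `(C*D)(u,v) = ∫₀¹ ∂₂C(u,t) ∂₁D(t,v) dt`. -/
def cstar (C D : ℝ → ℝ → ℝ) : ℝ → ℝ → ℝ :=
  fun u v => ∫ t in (0:ℝ)..1, d2 C u t * d1 D t v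

/-- Transpose of a copula: `C^t(u,v) = C(v,u)`. -/
def ctransp (C : ℝ → ℝ → ℝ) : ℝ → ℝ → ℝ := fun u v => C v u

/-- `C` is left invertible: `C^t * C = M` on `[0,1]²`, where `M(u,v) = min(u,v)`. -/
def LeftInvertibleC (C : ℝ → ℝ → ℝ) : Prop :=
  ∀ u ∈ Icc (0:ℝ) 1, ∀ v ∈ Icc (0:ℝ) 1, cstar (ctransp C) C u v = min u v

/-- `C` is right invertible: `C * C^t = M` on `[0,1]²`. -/
def RightInvertibleC (C : ℝ → ℝ → ℝ) : Prop :=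
  ∀ u ∈ Icc (0:ℝ) 1, ∀ v ∈ Icc (0:ℝ) 1, cstar C (ctransp C) u v = min u v

open MeasureTheory intervalIntegral
open scoped NNReal


lemma deriv_comp_affine (f : ℝ → ℝ) {m : ℝ} (hm : m ≠ 0) (b x : ℝ) :
    deriv (fun y => f (m * y + b)) x = m * deriv f (m * x + b) := by
  by_cases h : DifferentiableAt ℝ f (m * x + b)
  · have hinner : HasDerivAt (fun y : ℝ => m * y + b) m x := by
      simpa using ((hasDerivAt_id x).const_mul m).add_const b
    have := (h.hasDerivAt.comp x hinner).deriv
    rw [Function.comp_def] at this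
    rw [this]; ring
  · have h2 : ¬ DifferentiableAt ℝ (fun y => f (m * y + b)) x := by
      intro hd
      apply h
      have hg : DifferentiableAt ℝ (fun z : ℝ => (z - b) / m) (m * x + b) :=
        (differentiableAt_id.sub_const b).div_const m
      have hx : ((m * x + b) - b) / m = x := by field_simp; ring
      have := DifferentiableAt.comp (m * x + b) (hx ▸ hd) hg
      have hfe : ((fun y => f (m * y + b)) ∘ (fun z => (z - b) / m)) = f := by
        funext z; simp only [Function.comp]; congr 1; field_simp; ring
      rwa [hfe] at this
    rw [deriv_zero_of_not_differentiableAt h, deriv_zero_of_not_differentiableAt h2, mul_zero]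

lemma abs_deriv_le_of_lip {f : ℝ → ℝ} {K : ℝ≥0} (hf : LipschitzWith K f) (x : ℝ) :
    |deriv f x| ≤ K := by
  simpa [Real.norm_eq_abs] using
    norm_deriv_le_of_lipschitzOn (𝕜 := ℝ) (s := univ) (x₀ := x) Filter.univ_mem
      (lipschitzOnWith_univ.2 hf)


lemma ae_ne_vol (b : ℝ) : ∀ᵐ x : ℝ, x ≠ b := by
  rw [MeasureTheory.ae_iff]
  convert Real.volume_singleton (a := b) using 2
  ext x; simp

lemma sub1 {a b M : ℝ} {φ : ℝ → ℝ} (hab : a < b)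
    (hφ : Measurable φ) (hφb : ∀ s, |φ s| ≤ M) {f1 : ℝ → ℝ}
    (hf1 : ∀ u ∈ Ioo a b, f1 u = φ ((u - a) / (b - a))) :
    IntervalIntegrable f1 volume a b ∧
    ∫ u in a..b, f1 u = (b - a) * ∫ s in (0:ℝ)..1, φ s := by
  have hm : b - a ≠ 0 := sub_ne_zero.2 hab.ne'
  have haeimp : ∀ᵐ x : ℝ, x ∈ uIoc a b → f1 x = φ ((x - a) / (b - a)) := by
    filter_upwards [ae_ne_vol b] with x hxb hx
    rw [uIoc_of_le hab.le] at hx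
    exact hf1 x ⟨hx.1, lt_of_le_of_ne hx.2 hxb⟩
  have hφm : Measurable fun u : ℝ => φ ((u - a) / (b - a)) :=
    hφ.comp ((measurable_id.sub_const a).div_const _)
  have hint : IntegrableOn (fun u : ℝ => φ ((u - a) / (b - a))) (uIoc a b) volume := by
    apply Measure.integrableOn_of_bounded (M := M)
      (by rw [uIoc_of_le hab.le]; exact measure_Ioc_lt_top.ne) hφm.aestronglyMeasurable
    exact Filter.Eventually.of_forall fun x => by simpa [Real.norm_eq_abs] using hφb _
  have hii : IntervalIntegrable f1 volume a b := by
    rw [intervalIntegrable_iff]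
    exact hint.congr ((ae_restrict_iff' measurableSet_uIoc).2 (haeimp.mono fun x h hx => (h hx).symm))
  refine ⟨hii, ?_⟩
  rw [intervalIntegral.integral_congr_ae haeimp]
  have h1 := intervalIntegral.integral_comp_sub_right (a := a) (b := b)
    (fun y => φ (y / (b - a))) a
  rw [h1, sub_self, intervalIntegral.integral_comp_div _ hm, zero_div, div_self hm,
    smul_eq_mul]

lemma int_key {k ℓ : ℕ} (P Q : ℕ → ℝ)
    (hP0 : P 0 = 0) (hPk : P k = 1) (hQ0 : Q 0 = 0) (hQℓ : Q ℓ = 1)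
    (hPm : ∀ i < k, P i < P (i + 1)) (hQm : ∀ j < ℓ, Q j < Q (j + 1))
    (f g : ℝ → ℝ → ℝ) (c : ℕ → ℕ → ℝ) (M : ℝ)
    (hg : Measurable (Function.uncurry g))
    (hgb : ∀ s t, |g s t| ≤ M)
    (hf : ∀ i < k, ∀ j < ℓ, ∀ u ∈ Ioo (P i) (P (i + 1)), ∀ v ∈ Ioo (Q j) (Q (j + 1)),
      f u v = c i j * g ((u - P i) / (P (i + 1) - P i)) ((v - Q j) / (Q (j + 1) - Q j))) :
    (∫ v in (0:ℝ)..1, ∫ u in (0:ℝ)..1, (f u v) ^ 2) =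
      (∑ j ∈ Finset.range ℓ, ∑ i ∈ Finset.range k,
        (c i j) ^ 2 * (P (i + 1) - P i) * (Q (j + 1) - Q j)) *
        ∫ t in (0:ℝ)..1, ∫ s in (0:ℝ)..1, (g s t) ^ 2 := by
  set H : ℝ → ℝ := fun t => ∫ s in (0:ℝ)..1, (g s t) ^ 2 with hH
  have hg2 : Measurable fun p : ℝ × ℝ => (g p.1 p.2) ^ 2 := hg.pow_const 2
  have hHmeas : Measurable H := by
    have : H = fun t => ∫ s in Ioc (0:ℝ) 1, (g s t) ^ 2 := by
      funext t; rw [hH]; exact intervalIntegral.integral_of_le zero_le_one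
    rw [this]
    exact (StronglyMeasurable.integral_prod_right
      (f := fun t s => (g s t) ^ 2)
      ((hg2.comp measurable_swap).stronglyMeasurable)).measurable
  have hM0 : 0 ≤ M := le_trans (abs_nonneg _) (hgb 0 0)
  have hHb : ∀ t, |H t| ≤ M ^ 2 := by
    intro t
    rw [hH]
    have h1 : ∀ s : ℝ, |(g s t) ^ 2| ≤ M ^ 2 := by
      intro s
      rw [abs_of_nonneg (sq_nonneg _)]
      exact sq_le_sq' (neg_le_of_abs_le (hgb s t)) (le_of_abs_le (hgb s t))
    have h2 := intervalIntegral.norm_integral_le_of_norm_le_const (a := (0:ℝ)) (b := 1)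
      (C := M ^ 2) (f := fun s => (g s t) ^ 2)
      (fun x _ => by simpa [Real.norm_eq_abs] using h1 x)
    simpa [Real.norm_eq_abs] using h2
  -- Step A
  set Φ : ℝ → ℝ := fun v => ∫ u in (0:ℝ)..1, (f u v) ^ 2 with hΦ
  have stepA : ∀ j < ℓ, ∀ v ∈ Ioo (Q j) (Q (j + 1)),
      Φ v = (∑ i ∈ Finset.range k, (c i j) ^ 2 * (P (i + 1) - P i)) *
        H ((v - Q j) / (Q (j + 1) - Q j)) := by
    intro j hj v hv
    set w := (v - Q j) / (Q (j + 1) - Q j) with hw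
    have sub_i : ∀ i < k,
        IntervalIntegrable (fun u => (f u v) ^ 2) volume (P i) (P (i + 1)) ∧
        ∫ u in P i..P (i + 1), (f u v) ^ 2 =
          (P (i + 1) - P i) * ((c i j) ^ 2 * H w) := by
      intro i hi
      have hφm : Measurable fun s => (c i j) ^ 2 * (g s w) ^ 2 :=
        ((hg.comp (measurable_id.prodMk measurable_const)).pow_const 2).const_mul _
      have hφb : ∀ s, |(c i j) ^ 2 * (g s w) ^ 2| ≤ (c i j) ^ 2 * M ^ 2 := by
        intro s
        rw [abs_of_nonneg (by positivity)]
        apply mul_le_mul_of_nonneg_left _ (sq_nonneg _)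
        exact sq_le_sq' (neg_le_of_abs_le (hgb s w)) (le_of_abs_le (hgb s w))
      have hform : ∀ u ∈ Ioo (P i) (P (i + 1)),
          (f u v) ^ 2 = (c i j) ^ 2 * (g ((u - P i) / (P (i + 1) - P i)) w) ^ 2 := by
        intro u hu
        rw [hf i hi j hj u hu v hv, mul_pow]
      obtain ⟨h1, h2⟩ := sub1 (hPm i hi) hφm hφb hform
      refine ⟨h1, ?_⟩
      rw [h2, intervalIntegral.integral_const_mul]
    have hsum := intervalIntegral.sum_integral_adjacent_intervals
      (f := fun u => (f u v) ^ 2) (μ := volume) (a := P) (n := k)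
      (fun i hi => (sub_i i hi).1)
    simp only [hP0, hPk] at hsum
    show (∫ (u:ℝ) in (0:ℝ)..1, f u v ^ 2) = _
    rw [← hsum]
    rw [Finset.sum_congr rfl fun i hi => (sub_i i (Finset.mem_range.1 hi)).2]
    rw [Finset.sum_mul]
    congr 1; funext i
    ring
  -- Step B
  have sub_j : ∀ j < ℓ,
      IntervalIntegrable Φ volume (Q j) (Q (j + 1)) ∧
      ∫ v in Q j..Q (j + 1), Φ v =
        (Q (j + 1) - Q j) * ((∑ i ∈ Finset.range k, (c i j) ^ 2 * (P (i + 1) - P i)) *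
          ∫ t in (0:ℝ)..1, H t) := by
    intro j hj
    have hφm : Measurable fun t =>
        (∑ i ∈ Finset.range k, (c i j) ^ 2 * (P (i + 1) - P i)) * H t := hHmeas.const_mul _
    have hφb : ∀ t, |(∑ i ∈ Finset.range k, (c i j) ^ 2 * (P (i + 1) - P i)) * H t| ≤
        |∑ i ∈ Finset.range k, (c i j) ^ 2 * (P (i + 1) - P i)| * M ^ 2 := fun t => by
      rw [abs_mul]; exact mul_le_mul_of_nonneg_left (hHb t) (abs_nonneg _)
    obtain ⟨h1, h2⟩ := sub1 (hQm j hj) hφm hφb (stepA j hj)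
    refine ⟨h1, ?_⟩
    rw [h2, intervalIntegral.integral_const_mul]
  have hsum := intervalIntegral.sum_integral_adjacent_intervals (f := Φ) (μ := volume)
    (a := Q) (n := ℓ) (fun j hj => (sub_j j hj).1)
  simp only [hQ0, hQℓ] at hsum
  show (∫ v in (0:ℝ)..1, Φ v) = _
  rw [← hsum, Finset.sum_congr rfl fun j hj => (sub_j j (Finset.mem_range.1 hj)).2]
  have hrfl : (∫ t in (0:ℝ)..1, ∫ s in (0:ℝ)..1, (g s t) ^ 2) = ∫ t in (0:ℝ)..1, H t := rfl
  rw [hrfl, Finset.sum_mul]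
  apply Finset.sum_congr rfl
  intro j _
  rw [show (∑ i ∈ Finset.range k, (c i j) ^ 2 * (P (i + 1) - P i) * (Q (j + 1) - Q j)) =
    (∑ i ∈ Finset.range k, (c i j) ^ 2 * (P (i + 1) - P i)) * (Q (j + 1) - Q j) from
    (Finset.sum_mul _ _ _).symm]
  ring

-- part: pP / qQ structure
section PQ
variable {k ℓ : ℕ} (a : Fin k → Fin ℓ → ℝ)

lemma pP_succ (i : Fin k) : pP a ((i : ℕ) + 1) = pP a (i : ℕ) + ∑ j, a i j := by
  have h : ∀ i' : Fin k, (if (i' : ℕ) < (i : ℕ) + 1 then ∑ j, a i' j else 0) =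
      (if (i' : ℕ) < (i : ℕ) then ∑ j, a i' j else 0) +
      (if i' = i then ∑ j, a i' j else 0) := by
    intro i'
    rcases lt_trichotomy (i' : ℕ) (i : ℕ) with h | h | h
    · rw [if_pos (by omega), if_pos h, if_neg (by simp only [Fin.ext_iff]; omega)]; ring
    · have hii : i' = i := Fin.ext h
      rw [if_pos (by omega), if_neg (by omega), if_pos hii, hii]; ring
    · rw [if_neg (by omega), if_neg (by omega), if_neg (by simp only [Fin.ext_iff]; omega)]; ring
  unfold pP
  rw [Finset.sum_congr rfl (fun i' _ => h i'), Finset.sum_add_distrib,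
    Finset.sum_ite_eq' Finset.univ i (fun i' => ∑ j, a i' j)]
  simp

lemma pP_zero : pP a 0 = 0 := by simp [pP]

lemma pP_k (ha : IsTransfMatrix a) : pP a k = 1 := by
  unfold pP
  rw [← ha.2.1]
  apply Finset.sum_congr rfl
  intro i _
  rw [if_pos i.isLt]

lemma pP_mono (ha : IsTransfMatrix a) : Monotone (pP a) := by
  apply monotone_nat_of_le_succ
  intro m
  unfold pP
  apply Finset.sum_le_sum
  intro i _
  by_cases h : (i : ℕ) < m
  · rw [if_pos h, if_pos (by omega)]
  · rw [if_neg h]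
    by_cases h2 : (i : ℕ) < m + 1
    · rw [if_pos h2]
      exact Finset.sum_nonneg fun j _ => ha.1 i j
    · rw [if_neg h2]

lemma dP_pos (ha : IsTransfMatrix a) (i : Fin k) :
    0 < pP a ((i : ℕ) + 1) - pP a (i : ℕ) := by
  rw [pP_succ]
  have : 0 < ∑ j, a i j := by
    obtain ⟨j, hj⟩ := ha.2.2.2 i
    exact Finset.sum_pos' (fun j' _ => ha.1 i j') ⟨j, Finset.mem_univ j, (ha.1 i j).lt_of_ne (Ne.symm hj)⟩
  linarith

lemma transpose_istm (ha : IsTransfMatrix a) : IsTransfMatrix (fun j i => a i j) := by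
  obtain ⟨h1, h2, h3, h4⟩ := ha
  exact ⟨fun j i => h1 i j, by rw [Finset.sum_comm]; exact h2, h4, h3⟩

lemma qQ_eq_pP_transpose (m : ℕ) : qQ a m = pP (fun j i => a i j) m := rfl

end PQ

-- part: copula facts, clamp, Ebar
section Cop

lemma cop_mono1 {C : ℝ → ℝ → ℝ} (hC : IsCopula C) {u₁ u₂ v : ℝ} (h1 : u₁ ∈ Icc (0:ℝ) 1)
    (h2 : u₂ ∈ Icc (0:ℝ) 1) (hv : v ∈ Icc (0:ℝ) 1) (h12 : u₁ ≤ u₂) :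
    C u₁ v ≤ C u₂ v ∧ C u₂ v - C u₁ v ≤ u₂ - u₁ := by
  obtain ⟨hb0, hb0', hb1, hb1', h2i⟩ := hC
  constructor
  · have := h2i u₁ u₂ 0 v h1 h2 ⟨le_refl 0, zero_le_one⟩ hv h12 hv.1
    rw [hb0 u₁ h1, hb0 u₂ h2] at this; linarith
  · have := h2i u₁ u₂ v 1 h1 h2 hv ⟨zero_le_one, le_refl 1⟩ h12 hv.2
    rw [hb1 u₁ h1, hb1 u₂ h2] at this; linarith

lemma cop_mono2 {C : ℝ → ℝ → ℝ} (hC : IsCopula C) {u v₁ v₂ : ℝ} (hu : u ∈ Icc (0:ℝ) 1)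
    (h1 : v₁ ∈ Icc (0:ℝ) 1) (h2 : v₂ ∈ Icc (0:ℝ) 1) (h12 : v₁ ≤ v₂) :
    C u v₁ ≤ C u v₂ ∧ C u v₂ - C u v₁ ≤ v₂ - v₁ := by
  obtain ⟨hb0, hb0', hb1, hb1', h2i⟩ := hC
  constructor
  · have := h2i 0 u v₁ v₂ ⟨le_refl 0, zero_le_one⟩ hu h1 h2 hu.1 h12
    rw [hb0' v₁ h1, hb0' v₂ h2] at this; linarith
  · have := h2i u 1 v₁ v₂ hu ⟨zero_le_one, le_refl 1⟩ h1 h2 hu.2 h12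
    rw [hb1' v₁ h1, hb1' v₂ h2] at this; linarith

lemma cop_lip1 {C : ℝ → ℝ → ℝ} (hC : IsCopula C) {u₁ u₂ v : ℝ} (h1 : u₁ ∈ Icc (0:ℝ) 1)
    (h2 : u₂ ∈ Icc (0:ℝ) 1) (hv : v ∈ Icc (0:ℝ) 1) :
    |C u₂ v - C u₁ v| ≤ |u₂ - u₁| := by
  rcases le_total u₁ u₂ with h | h
  · obtain ⟨hm, hl⟩ := cop_mono1 hC h1 h2 hv h
    rw [abs_of_nonneg (by linarith), abs_of_nonneg (by linarith)]; exact hl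
  · obtain ⟨hm, hl⟩ := cop_mono1 hC h2 h1 hv h
    rw [abs_of_nonpos (by linarith), abs_of_nonpos (by linarith)]; linarith

lemma cop_lip2 {C : ℝ → ℝ → ℝ} (hC : IsCopula C) {u v₁ v₂ : ℝ} (hu : u ∈ Icc (0:ℝ) 1)
    (h1 : v₁ ∈ Icc (0:ℝ) 1) (h2 : v₂ ∈ Icc (0:ℝ) 1) :
    |C u v₂ - C u v₁| ≤ |v₂ - v₁| := by
  rcases le_total v₁ v₂ with h | h
  · obtain ⟨hm, hl⟩ := cop_mono2 hC hu h1 h2 h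
    rw [abs_of_nonneg (by linarith), abs_of_nonneg (by linarith)]; exact hl
  · obtain ⟨hm, hl⟩ := cop_mono2 hC hu h2 h1 h
    rw [abs_of_nonpos (by linarith), abs_of_nonpos (by linarith)]; linarith

def clamp (x : ℝ) : ℝ := max 0 (min 1 x)

lemma clamp_mem (x : ℝ) : clamp x ∈ Icc (0:ℝ) 1 :=
  ⟨le_max_left _ _, max_le zero_le_one (min_le_left _ _)⟩

lemma clamp_eq {x : ℝ} (hx : x ∈ Icc (0:ℝ) 1) : clamp x = x := by
  unfold clamp
  rw [min_eq_right hx.2, max_eq_right hx.1]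

lemma clamp_lip (x y : ℝ) : |clamp x - clamp y| ≤ |x - y| := by
  unfold clamp
  have h1 : |max 0 (min 1 x) - max 0 (min 1 y)| ≤ |min 1 x - min 1 y| := by
    rw [max_comm 0 (min 1 x), max_comm 0 (min 1 y)]
    exact abs_max_sub_max_le_abs _ _ _
  have h2 : |min 1 x - min 1 y| ≤ |x - y| := by
    have h := abs_max_sub_max_le_abs (-x) (-y) (-1)
    rw [max_neg_neg, max_neg_neg] at h
    calc |min 1 x - min 1 y| = |(- min x 1) - (- min y 1)| := by
          rw [min_comm 1 x, min_comm 1 y, abs_sub_comm]; ring_nf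
      _ ≤ |(-x) - (-y)| := h
      _ = |x - y| := by rw [abs_sub_comm]; ring_nf
  exact h1.trans h2

/-- The clamped difference of the two copulas. -/
def Ebar (C D : ℝ → ℝ → ℝ) : ℝ → ℝ → ℝ :=
  fun u v => C (clamp u) (clamp v) - D (clamp u) (clamp v)

lemma Ebar_eq {C D : ℝ → ℝ → ℝ} {u v : ℝ} (hu : u ∈ Icc (0:ℝ) 1) (hv : v ∈ Icc (0:ℝ) 1) :
    Ebar C D u v = csub C D u v := by
  unfold Ebar csub; rw [clamp_eq hu, clamp_eq hv]

lemma Ebar_lip1 {C D : ℝ → ℝ → ℝ} (hC : IsCopula C) (hD : IsCopula D) (w x y : ℝ) :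
    |Ebar C D x w - Ebar C D y w| ≤ 2 * |x - y| := by
  unfold Ebar
  have hcw := clamp_mem w
  have h1 := cop_lip1 hC (clamp_mem y) (clamp_mem x) hcw
  have h2 := cop_lip1 hD (clamp_mem y) (clamp_mem x) hcw
  have h3 := clamp_lip x y
  calc |C (clamp x) (clamp w) - D (clamp x) (clamp w) -
        (C (clamp y) (clamp w) - D (clamp y) (clamp w))|
      ≤ |C (clamp x) (clamp w) - C (clamp y) (clamp w)| +
        |D (clamp x) (clamp w) - D (clamp y) (clamp w)| := by
        have := abs_sub (C (clamp x) (clamp w) - C (clamp y) (clamp w))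
          (D (clamp x) (clamp w) - D (clamp y) (clamp w))
        apply le_trans _ this
        apply le_of_eq; congr 1; ring
    _ ≤ |clamp x - clamp y| + |clamp x - clamp y| := add_le_add h1 h2
    _ ≤ 2 * |x - y| := by linarith

lemma Ebar_lip2 {C D : ℝ → ℝ → ℝ} (hC : IsCopula C) (hD : IsCopula D) (w x y : ℝ) :
    |Ebar C D w x - Ebar C D w y| ≤ 2 * |x - y| := by
  unfold Ebar
  have hcw := clamp_mem w
  have h1 := cop_lip2 hC hcw (clamp_mem y) (clamp_mem x)
  have h2 := cop_lip2 hD hcw (clamp_mem y) (clamp_mem x)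
  have h3 := clamp_lip x y
  calc |C (clamp w) (clamp x) - D (clamp w) (clamp x) -
        (C (clamp w) (clamp y) - D (clamp w) (clamp y))|
      ≤ |C (clamp w) (clamp x) - C (clamp w) (clamp y)| +
        |D (clamp w) (clamp x) - D (clamp w) (clamp y)| := by
        have := abs_sub (C (clamp w) (clamp x) - C (clamp w) (clamp y))
          (D (clamp w) (clamp x) - D (clamp w) (clamp y))
        apply le_trans _ this
        apply le_of_eq; congr 1; ring
    _ ≤ |clamp x - clamp y| + |clamp x - clamp y| := add_le_add h1 h2
    _ ≤ 2 * |x - y| := by linarith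

end Cop

section Ederiv
variable {C D : ℝ → ℝ → ℝ}

lemma Ebar_lipw1 (hC : IsCopula C) (hD : IsCopula D) (w : ℝ) :
    LipschitzWith 2 (fun u => Ebar C D u w) := by
  apply LipschitzWith.of_dist_le_mul
  intro x y
  simpa [Real.dist_eq] using Ebar_lip1 hC hD w x y

lemma Ebar_lipw2 (hC : IsCopula C) (hD : IsCopula D) (w : ℝ) :
    LipschitzWith 2 (fun v => Ebar C D w v) := by
  apply LipschitzWith.of_dist_le_mul
  intro x y
  simpa [Real.dist_eq] using Ebar_lip2 hC hD w x y

lemma d1_Ebar_bound (hC : IsCopula C) (hD : IsCopula D) (u w : ℝ) :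
    |d1 (Ebar C D) u w| ≤ 2 := by
  have := abs_deriv_le_of_lip (Ebar_lipw1 hC hD w) u
  simpa [d1] using this

lemma d2_Ebar_bound (hC : IsCopula C) (hD : IsCopula D) (u w : ℝ) :
    |d2 (Ebar C D) u w| ≤ 2 := by
  have := abs_deriv_le_of_lip (Ebar_lipw2 hC hD u) w
  simpa [d2] using this

lemma Ebar_cont (hC : IsCopula C) (hD : IsCopula D) :
    Continuous (fun p : ℝ × ℝ => Ebar C D p.1 p.2) := by
  apply LipschitzWith.continuous (K := 4)
  apply LipschitzWith.of_dist_le_mul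
  rintro ⟨x, y⟩ ⟨x', y'⟩
  have h1 := Ebar_lip1 hC hD y x x'
  have h2 := Ebar_lip2 hC hD x' y y'
  have hd1 : dist x x' ≤ dist (⟨x, y⟩ : ℝ × ℝ) ⟨x', y'⟩ := le_max_left _ _
  have hd2 : dist y y' ≤ dist (⟨x, y⟩ : ℝ × ℝ) ⟨x', y'⟩ := le_max_right _ _
  rw [Real.dist_eq] at hd1 hd2
  calc dist (Ebar C D x y) (Ebar C D x' y')
      ≤ |Ebar C D x y - Ebar C D x' y| + |Ebar C D x' y - Ebar C D x' y'| := by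
        rw [Real.dist_eq]
        have := abs_sub_le (Ebar C D x y) (Ebar C D x' y) (Ebar C D x' y')
        exact this
    _ ≤ 2 * |x - x'| + 2 * |y - y'| := add_le_add h1 h2
    _ ≤ (4:ℝ≥0) * dist (⟨x, y⟩ : ℝ × ℝ) ⟨x', y'⟩ := by
        push_cast
        nlinarith [dist_nonneg (x := (⟨x, y⟩ : ℝ × ℝ)) (y := ⟨x', y'⟩)]

lemma d1_Ebar_meas (hC : IsCopula C) (hD : IsCopula D) :
    Measurable (Function.uncurry (d1 (Ebar C D))) := by
  have hc : Continuous (Function.uncurry (fun (w u : ℝ) => Ebar C D u w)) := by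
    have := Ebar_cont hC hD
    exact this.comp (continuous_snd.prodMk continuous_fst)
  have h := measurable_deriv_with_param (𝕜 := ℝ) (f := fun (w u : ℝ) => Ebar C D u w) hc
  have : Function.uncurry (d1 (Ebar C D)) =
      (fun p : ℝ × ℝ => deriv (fun u => Ebar C D u p.1) p.2) ∘ Prod.swap := rfl
  rw [this]
  exact h.comp measurable_swap

lemma d2_Ebar_meas (hC : IsCopula C) (hD : IsCopula D) :
    Measurable (Function.uncurry (d2 (Ebar C D))) := by
  have hc : Continuous (Function.uncurry (fun (u v : ℝ) => Ebar C D u v)) :=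
    Ebar_cont hC hD
  exact measurable_deriv_with_param (𝕜 := ℝ) (f := fun (u v : ℝ) => Ebar C D u v) hc

-- boundary zeros of E = csub C D
lemma E_zero_left (hC : IsCopula C) (hD : IsCopula D) {w : ℝ} (hw : w ∈ Icc (0:ℝ) 1) :
    csub C D 0 w = 0 := by
  unfold csub; rw [hC.2.1 w hw, hD.2.1 w hw]; ring

lemma E_one_left (hC : IsCopula C) (hD : IsCopula D) {w : ℝ} (hw : w ∈ Icc (0:ℝ) 1) :
    csub C D 1 w = 0 := by
  unfold csub; rw [hC.2.2.2.1 w hw, hD.2.2.2.1 w hw]; ring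

lemma E_zero_right (hC : IsCopula C) (hD : IsCopula D) {w : ℝ} (hw : w ∈ Icc (0:ℝ) 1) :
    csub C D w 0 = 0 := by
  unfold csub; rw [hC.1 w hw, hD.1 w hw]; ring

lemma E_one_right (hC : IsCopula C) (hD : IsCopula D) {w : ℝ} (hw : w ∈ Icc (0:ℝ) 1) :
    csub C D w 1 = 0 := by
  unfold csub; rw [hC.2.2.1 w hw, hD.2.2.1 w hw]; ring

end Ederiv

section FG
variable {k ℓ : ℕ} {a : Fin k → Fin ℓ → ℝ}

lemma Fdist_mem (ha : IsTransfMatrix a) (i : Fin k) (u : ℝ) :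
    Fdist a i u ∈ Icc (0:ℝ) 1 := by
  unfold Fdist
  split_ifs with h
  · constructor
    · apply le_min zero_le_one
      apply div_nonneg (by linarith) (le_of_lt (dP_pos a ha i))
    · exact min_le_left _ _
  · exact ⟨le_refl 0, zero_le_one⟩

lemma Fdist_inside (ha : IsTransfMatrix a) (i : Fin k) {u : ℝ}
    (hu : u ∈ Ioo (pP a (i : ℕ)) (pP a ((i : ℕ) + 1))) :
    Fdist a i u = (u - pP a (i : ℕ)) / (pP a ((i : ℕ) + 1) - pP a (i : ℕ)) := by
  unfold Fdist
  rw [if_pos hu.1]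
  apply min_eq_right
  rw [div_le_one (dP_pos a ha i)]
  linarith [hu.2]

lemma Fdist_inside_mem (ha : IsTransfMatrix a) (i : Fin k) {u : ℝ}
    (hu : u ∈ Ioo (pP a (i : ℕ)) (pP a ((i : ℕ) + 1))) :
    (u - pP a (i : ℕ)) / (pP a ((i : ℕ) + 1) - pP a (i : ℕ)) ∈ Ioo (0:ℝ) 1 := by
  constructor
  · apply div_pos (by linarith [hu.1]) (dP_pos a ha i)
  · rw [div_lt_one (dP_pos a ha i)]; linarith [hu.2]

lemma Fdist_hi (ha : IsTransfMatrix a) {i i' : Fin k} (h : (i' : ℕ) < (i : ℕ)) {u : ℝ}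
    (hu : pP a (i : ℕ) < u) : Fdist a i' u = 1 := by
  have hle : pP a ((i' : ℕ) + 1) ≤ pP a (i : ℕ) := pP_mono a ha (by omega)
  have hd := dP_pos a ha i'
  unfold Fdist
  rw [if_pos (by linarith)]
  apply min_eq_left
  rw [le_div_iff₀ (by linarith), one_mul]
  linarith

lemma Fdist_lo (ha : IsTransfMatrix a) {i i' : Fin k} (h : (i : ℕ) < (i' : ℕ)) {u : ℝ}
    (hu : u < pP a ((i : ℕ) + 1)) : Fdist a i' u = 0 := by
  have hle : pP a ((i : ℕ) + 1) ≤ pP a (i' : ℕ) := pP_mono a ha (by omega)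
  unfold Fdist
  rw [if_neg (by linarith)]

lemma Gdist_eq_Fdist (j : Fin ℓ) (v : ℝ) : Gdist a j v = Fdist (fun j i => a i j) j v := rfl

lemma dQ_pos (ha : IsTransfMatrix a) (j : Fin ℓ) :
    0 < qQ a ((j : ℕ) + 1) - qQ a (j : ℕ) := by
  rw [qQ_eq_pP_transpose, qQ_eq_pP_transpose]
  exact dP_pos _ (transpose_istm a ha) j

lemma Gdist_mem (ha : IsTransfMatrix a) (j : Fin ℓ) (v : ℝ) :
    Gdist a j v ∈ Icc (0:ℝ) 1 := by
  rw [Gdist_eq_Fdist]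
  exact Fdist_mem (transpose_istm a ha) j v

lemma Gdist_inside (ha : IsTransfMatrix a) (j : Fin ℓ) {v : ℝ}
    (hv : v ∈ Ioo (qQ a (j : ℕ)) (qQ a ((j : ℕ) + 1))) :
    Gdist a j v = (v - qQ a (j : ℕ)) / (qQ a ((j : ℕ) + 1) - qQ a (j : ℕ)) := by
  rw [Gdist_eq_Fdist]
  exact Fdist_inside (transpose_istm a ha) j hv

lemma Gdist_inside_mem (ha : IsTransfMatrix a) (j : Fin ℓ) {v : ℝ}
    (hv : v ∈ Ioo (qQ a (j : ℕ)) (qQ a ((j : ℕ) + 1))) :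
    (v - qQ a (j : ℕ)) / (qQ a ((j : ℕ) + 1) - qQ a (j : ℕ)) ∈ Ioo (0:ℝ) 1 :=
  Fdist_inside_mem (transpose_istm a ha) j hv

lemma Gdist_hi (ha : IsTransfMatrix a) {j j' : Fin ℓ} (h : (j' : ℕ) < (j : ℕ)) {v : ℝ}
    (hv : qQ a (j : ℕ) < v) : Gdist a j' v = 1 :=
  Fdist_hi (transpose_istm a ha) h hv

lemma Gdist_lo (ha : IsTransfMatrix a) {j j' : Fin ℓ} (h : (j : ℕ) < (j' : ℕ)) {v : ℝ}
    (hv : v < qQ a ((j : ℕ) + 1)) : Gdist a j' v = 0 :=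
  Fdist_lo (transpose_istm a ha) h hv

lemma patch_formula {C D : ℝ → ℝ → ℝ} (ha : IsTransfMatrix a) (hC : IsCopula C)
    (hD : IsCopula D) (i : Fin k) (j : Fin ℓ) {x y : ℝ}
    (hx : x ∈ Ioo (pP a (i : ℕ)) (pP a ((i : ℕ) + 1)))
    (hy : y ∈ Ioo (qQ a (j : ℕ)) (qQ a ((j : ℕ) + 1))) :
    csub (patch a C) (patch a D) x y =
      a i j * Ebar C D ((x - pP a (i : ℕ)) / (pP a ((i : ℕ) + 1) - pP a (i : ℕ)))
        ((y - qQ a (j : ℕ)) / (qQ a ((j : ℕ) + 1) - qQ a (j : ℕ))) := by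
  have key : csub (patch a C) (patch a D) x y =
      ∑ i', ∑ j', a i' j' * csub C D (Fdist a i' x) (Gdist a j' y) := by
    unfold csub patch
    rw [← Finset.sum_sub_distrib]
    apply Finset.sum_congr rfl
    intro i' _
    rw [← Finset.sum_sub_distrib]
    apply Finset.sum_congr rfl
    intro j' _
    ring
  rw [key]
  rw [Finset.sum_eq_single i ?_ (fun h => absurd (Finset.mem_univ i) h)]
  · rw [Finset.sum_eq_single j ?_ (fun h => absurd (Finset.mem_univ j) h)]
    · rw [Fdist_inside ha i hx, Gdist_inside ha j hy]
      congr 1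
      exact (Ebar_eq (mem_Icc_of_Ioo (Fdist_inside_mem ha i hx))
        (mem_Icc_of_Ioo (Gdist_inside_mem ha j hy))).symm
    · intro j' _ hj'
      rcases lt_or_gt_of_ne (fun h : (j' : ℕ) = (j : ℕ) => hj' (Fin.ext h)) with h | h
      · rw [Gdist_hi ha h hy.1, E_one_right hC hD (Fdist_mem ha i x), mul_zero]
      · rw [Gdist_lo ha h hy.2, E_zero_right hC hD (Fdist_mem ha i x), mul_zero]
  · intro i' _ hi'
    rcases lt_or_gt_of_ne (fun h : (i' : ℕ) = (i : ℕ) => hi' (Fin.ext h)) with h | h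
    · rw [Finset.sum_eq_zero]
      intro j' _
      rw [Fdist_hi ha h hx.1, E_one_left hC hD (Gdist_mem ha j' y), mul_zero]
    · rw [Finset.sum_eq_zero]
      intro j' _
      rw [Fdist_lo ha h hx.2, E_zero_left hC hD (Gdist_mem ha j' y), mul_zero]
end FG

section Dpatch
variable {k ℓ : ℕ} {a : Fin k → Fin ℓ → ℝ} {C D : ℝ → ℝ → ℝ}

lemma d1_patch (ha : IsTransfMatrix a) (hC : IsCopula C) (hD : IsCopula D)
    (i : Fin k) (j : Fin ℓ) {u v : ℝ}
    (hu : u ∈ Ioo (pP a (i : ℕ)) (pP a ((i : ℕ) + 1)))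
    (hv : v ∈ Ioo (qQ a (j : ℕ)) (qQ a ((j : ℕ) + 1))) :
    d1 (csub (patch a C) (patch a D)) u v =
      (a i j / (pP a ((i : ℕ) + 1) - pP a (i : ℕ))) *
        d1 (Ebar C D) ((u - pP a (i : ℕ)) / (pP a ((i : ℕ) + 1) - pP a (i : ℕ)))
          ((v - qQ a (j : ℕ)) / (qQ a ((j : ℕ) + 1) - qQ a (j : ℕ))) := by
  have hΔ : (0:ℝ) < pP a ((i : ℕ) + 1) - pP a (i : ℕ) := dP_pos a ha i
  set Δ := pP a ((i : ℕ) + 1) - pP a (i : ℕ) with hΔdef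
  set w := (v - qQ a (j : ℕ)) / (qQ a ((j : ℕ) + 1) - qQ a (j : ℕ)) with hwdef
  have hev : (fun x => csub (patch a C) (patch a D) x v) =ᶠ[nhds u]
      (fun x => a i j * Ebar C D ((x - pP a (i : ℕ)) / Δ) w) := by
    filter_upwards [Ioo_mem_nhds hu.1 hu.2] with x hx
    exact patch_formula ha hC hD i j hx hv
  unfold d1
  rw [hev.deriv_eq, deriv_const_mul_field]
  have hrw : (fun x => Ebar C D ((x - pP a (i : ℕ)) / Δ) w) =
      fun x => (fun z => Ebar C D z w) ((1 / Δ) * x + (-(pP a (i : ℕ)) / Δ)) := by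
    funext x; congr 1; field_simp; ring
  rw [hrw, deriv_comp_affine (fun z => Ebar C D z w) (m := 1 / Δ)
    (one_div_ne_zero hΔ.ne') (-(pP a (i : ℕ)) / Δ) u]
  have harg : (1 / Δ) * u + (-(pP a (i : ℕ)) / Δ) = (u - pP a (i : ℕ)) / Δ := by
    field_simp; ring
  rw [harg]
  ring

lemma d2_patch (ha : IsTransfMatrix a) (hC : IsCopula C) (hD : IsCopula D)
    (i : Fin k) (j : Fin ℓ) {u v : ℝ}
    (hu : u ∈ Ioo (pP a (i : ℕ)) (pP a ((i : ℕ) + 1)))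
    (hv : v ∈ Ioo (qQ a (j : ℕ)) (qQ a ((j : ℕ) + 1))) :
    d2 (csub (patch a C) (patch a D)) u v =
      (a i j / (qQ a ((j : ℕ) + 1) - qQ a (j : ℕ))) *
        d2 (Ebar C D) ((u - pP a (i : ℕ)) / (pP a ((i : ℕ) + 1) - pP a (i : ℕ)))
          ((v - qQ a (j : ℕ)) / (qQ a ((j : ℕ) + 1) - qQ a (j : ℕ))) := by
  have hΔ : (0:ℝ) < qQ a ((j : ℕ) + 1) - qQ a (j : ℕ) := dQ_pos ha j
  set Δ := qQ a ((j : ℕ) + 1) - qQ a (j : ℕ) with hΔdef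
  set s := (u - pP a (i : ℕ)) / (pP a ((i : ℕ) + 1) - pP a (i : ℕ)) with hsdef
  have hev : (fun y => csub (patch a C) (patch a D) u y) =ᶠ[nhds v]
      (fun y => a i j * Ebar C D s ((y - qQ a (j : ℕ)) / Δ)) := by
    filter_upwards [Ioo_mem_nhds hv.1 hv.2] with y hy
    exact patch_formula ha hC hD i j hu hy
  unfold d2
  rw [hev.deriv_eq, deriv_const_mul_field]
  have hrw : (fun y => Ebar C D s ((y - qQ a (j : ℕ)) / Δ)) =
      fun y => (fun z => Ebar C D s z) ((1 / Δ) * y + (-(qQ a (j : ℕ)) / Δ)) := by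
    funext y; congr 1; field_simp; ring
  rw [hrw, deriv_comp_affine (fun z => Ebar C D s z) (m := 1 / Δ)
    (one_div_ne_zero hΔ.ne') (-(qQ a (j : ℕ)) / Δ) v]
  have harg : (1 / Δ) * v + (-(qQ a (j : ℕ)) / Δ) = (v - qQ a (j : ℕ)) / Δ := by
    field_simp; ring
  rw [harg]
  ring

lemma d1_csub_eq_Ebar (hC : IsCopula C) (hD : IsCopula D) {u v : ℝ}
    (hu : u ∈ Ioo (0:ℝ) 1) (hv : v ∈ Ioo (0:ℝ) 1) :
    d1 (csub C D) u v = d1 (Ebar C D) u v := by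
  unfold d1
  apply Filter.EventuallyEq.deriv_eq
  filter_upwards [Ioo_mem_nhds hu.1 hu.2] with x hx
  unfold Ebar csub
  rw [clamp_eq (mem_Icc_of_Ioo hx), clamp_eq (mem_Icc_of_Ioo hv)]

lemma d2_csub_eq_Ebar (hC : IsCopula C) (hD : IsCopula D) {u v : ℝ}
    (hu : u ∈ Ioo (0:ℝ) 1) (hv : v ∈ Ioo (0:ℝ) 1) :
    d2 (csub C D) u v = d2 (Ebar C D) u v := by
  unfold d2
  apply Filter.EventuallyEq.deriv_eq
  filter_upwards [Ioo_mem_nhds hv.1 hv.2] with y hy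
  unfold Ebar csub
  rw [clamp_eq (mem_Icc_of_Ioo hu), clamp_eq (mem_Icc_of_Ioo hy)]

lemma sobSq1_eq_Ebar (hC : IsCopula C) (hD : IsCopula D) :
    sobSq1 (csub C D) = ∫ t in (0:ℝ)..1, ∫ s in (0:ℝ)..1, (d1 (Ebar C D) s t) ^ 2 := by
  unfold sobSq1
  apply intervalIntegral.integral_congr_ae
  filter_upwards [ae_ne_vol 1] with v hv1 hv
  rw [uIoc_of_le (zero_le_one' ℝ)] at hv
  have hvIoo : v ∈ Ioo (0:ℝ) 1 := ⟨hv.1, lt_of_le_of_ne hv.2 hv1⟩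
  apply intervalIntegral.integral_congr_ae
  filter_upwards [ae_ne_vol 1] with u hu1 hu
  rw [uIoc_of_le (zero_le_one' ℝ)] at hu
  have huIoo : u ∈ Ioo (0:ℝ) 1 := ⟨hu.1, lt_of_le_of_ne hu.2 hu1⟩
  rw [d1_csub_eq_Ebar hC hD huIoo hvIoo]

lemma sobSq2_eq_Ebar (hC : IsCopula C) (hD : IsCopula D) :
    sobSq2 (csub C D) = ∫ t in (0:ℝ)..1, ∫ s in (0:ℝ)..1, (d2 (Ebar C D) s t) ^ 2 := by
  unfold sobSq2
  apply intervalIntegral.integral_congr_ae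
  filter_upwards [ae_ne_vol 1] with v hv1 hv
  rw [uIoc_of_le (zero_le_one' ℝ)] at hv
  have hvIoo : v ∈ Ioo (0:ℝ) 1 := ⟨hv.1, lt_of_le_of_ne hv.2 hv1⟩
  apply intervalIntegral.integral_congr_ae
  filter_upwards [ae_ne_vol 1] with u hu1 hu
  rw [uIoc_of_le (zero_le_one' ℝ)] at hu
  have huIoo : u ∈ Ioo (0:ℝ) 1 := ⟨hu.1, lt_of_le_of_ne hu.2 hu1⟩
  rw [d2_csub_eq_Ebar hC hD huIoo hvIoo]

lemma sobSq1_nonneg (X : ℝ → ℝ → ℝ) : 0 ≤ sobSq1 X := by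
  unfold sobSq1
  apply intervalIntegral.integral_nonneg zero_le_one
  intro v _
  exact intervalIntegral.integral_nonneg zero_le_one fun u _ => sq_nonneg _

lemma sobSq2_nonneg (X : ℝ → ℝ → ℝ) : 0 ≤ sobSq2 X := by
  unfold sobSq2
  apply intervalIntegral.integral_nonneg zero_le_one
  intro v _
  exact intervalIntegral.integral_nonneg zero_le_one fun u _ => sq_nonneg _

end Dpatch

section SobEq
variable {k ℓ : ℕ} {a : Fin k → Fin ℓ → ℝ} {C D : ℝ → ℝ → ℝ}

lemma qQ_zero (a : Fin k → Fin ℓ → ℝ) : qQ a 0 = 0 := by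
  rw [qQ_eq_pP_transpose]; exact pP_zero _

lemma qQ_l (ha : IsTransfMatrix a) : qQ a ℓ = 1 := by
  rw [qQ_eq_pP_transpose]; exact pP_k _ (transpose_istm a ha)

lemma qQ_succ (j : Fin ℓ) : qQ a ((j : ℕ) + 1) = qQ a (j : ℕ) + ∑ i, a i j := by
  rw [qQ_eq_pP_transpose, qQ_eq_pP_transpose]; exact pP_succ _ j

lemma sobSq1_patch (ha : IsTransfMatrix a) (hC : IsCopula C) (hD : IsCopula D) :
    sobSq1 (csub (patch a C) (patch a D)) =
      (∑ j : Fin ℓ, ∑ i : Fin k, (a i j) ^ 2 *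
        (qQ a ((j : ℕ) + 1) - qQ a (j : ℕ)) / (pP a ((i : ℕ) + 1) - pP a (i : ℕ))) *
      sobSq1 (csub C D) := by
  set c : ℕ → ℕ → ℝ := fun i j =>
    if h : i < k ∧ j < ℓ then a ⟨i, h.1⟩ ⟨j, h.2⟩ / (pP a (i + 1) - pP a i) else 0 with hc
  have happ := int_key (pP a) (qQ a) (pP_zero a) (pP_k a ha) (qQ_zero a) (qQ_l ha)
    (fun i hi => by have := dP_pos a ha ⟨i, hi⟩; simp only [] at this; linarith)
    (fun j hj => by have := dQ_pos ha ⟨j, hj⟩; simp only [] at this; linarith)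
    (d1 (csub (patch a C) (patch a D))) (d1 (Ebar C D)) c 2
    (d1_Ebar_meas hC hD) (fun s t => d1_Ebar_bound hC hD s t)
    (fun i hi j hj u hu v hv => by
      rw [hc]; simp only [dif_pos (And.intro hi hj)]
      exact d1_patch ha hC hD ⟨i, hi⟩ ⟨j, hj⟩ hu hv)
  have hL : sobSq1 (csub (patch a C) (patch a D)) =
      ∫ v in (0:ℝ)..1, ∫ u in (0:ℝ)..1, (d1 (csub (patch a C) (patch a D)) u v) ^ 2 := rfl
  rw [hL, happ, ← sobSq1_eq_Ebar hC hD]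
  congr 1
  rw [← Fin.sum_univ_eq_sum_range (fun j => ∑ i ∈ Finset.range k,
    (c i j) ^ 2 * (pP a (i + 1) - pP a i) * (qQ a (j + 1) - qQ a j)) ℓ]
  apply Finset.sum_congr rfl
  intro j _
  rw [← Fin.sum_univ_eq_sum_range (fun i =>
    (c i (j : ℕ)) ^ 2 * (pP a (i + 1) - pP a i) * (qQ a ((j : ℕ) + 1) - qQ a (j : ℕ))) k]
  apply Finset.sum_congr rfl
  intro i _
  have hcv : c (i : ℕ) (j : ℕ) = a i j / (pP a ((i : ℕ) + 1) - pP a (i : ℕ)) := by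
    rw [hc]; simp only [dif_pos (And.intro i.isLt j.isLt), Fin.eta]
  rw [hcv]
  have hp := dP_pos a ha i
  field_simp

lemma sobSq2_patch (ha : IsTransfMatrix a) (hC : IsCopula C) (hD : IsCopula D) :
    sobSq2 (csub (patch a C) (patch a D)) =
      (∑ j : Fin ℓ, ∑ i : Fin k, (a i j) ^ 2 *
        (pP a ((i : ℕ) + 1) - pP a (i : ℕ)) / (qQ a ((j : ℕ) + 1) - qQ a (j : ℕ))) *
      sobSq2 (csub C D) := by
  set c : ℕ → ℕ → ℝ := fun i j =>
    if h : i < k ∧ j < ℓ then a ⟨i, h.1⟩ ⟨j, h.2⟩ / (qQ a (j + 1) - qQ a j) else 0 with hc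
  have happ := int_key (pP a) (qQ a) (pP_zero a) (pP_k a ha) (qQ_zero a) (qQ_l ha)
    (fun i hi => by have := dP_pos a ha ⟨i, hi⟩; simp only [] at this; linarith)
    (fun j hj => by have := dQ_pos ha ⟨j, hj⟩; simp only [] at this; linarith)
    (d2 (csub (patch a C) (patch a D))) (d2 (Ebar C D)) c 2
    (d2_Ebar_meas hC hD) (fun s t => d2_Ebar_bound hC hD s t)
    (fun i hi j hj u hu v hv => by
      rw [hc]; simp only [dif_pos (And.intro hi hj)]
      exact d2_patch ha hC hD ⟨i, hi⟩ ⟨j, hj⟩ hu hv)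
  have hL : sobSq2 (csub (patch a C) (patch a D)) =
      ∫ v in (0:ℝ)..1, ∫ u in (0:ℝ)..1, (d2 (csub (patch a C) (patch a D)) u v) ^ 2 := rfl
  rw [hL, happ, ← sobSq2_eq_Ebar hC hD]
  congr 1
  rw [← Fin.sum_univ_eq_sum_range (fun j => ∑ i ∈ Finset.range k,
    (c i j) ^ 2 * (pP a (i + 1) - pP a i) * (qQ a (j + 1) - qQ a j)) ℓ]
  apply Finset.sum_congr rfl
  intro j _
  rw [← Fin.sum_univ_eq_sum_range (fun i =>
    (c i (j : ℕ)) ^ 2 * (pP a (i + 1) - pP a i) * (qQ a ((j : ℕ) + 1) - qQ a (j : ℕ))) k]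
  apply Finset.sum_congr rfl
  intro i _
  have hcv : c (i : ℕ) (j : ℕ) = a i j / (qQ a ((j : ℕ) + 1) - qQ a (j : ℕ)) := by
    rw [hc]; simp only [dif_pos (And.intro i.isLt j.isLt), Fin.eta]
  rw [hcv]
  have hq := dQ_pos ha j
  field_simp

-- sum of squared increments < 1
lemma sum_dp_sq_lt_one (a : Fin k → Fin ℓ → ℝ) (ha : IsTransfMatrix a) (hk : 2 ≤ k) :
    ∑ i : Fin k, (pP a ((i : ℕ) + 1) - pP a (i : ℕ)) ^ 2 < 1 := by
  have hpos : ∀ i : Fin k, 0 < pP a ((i : ℕ) + 1) - pP a (i : ℕ) := dP_pos a ha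
  have hsum : ∑ i : Fin k, (pP a ((i : ℕ) + 1) - pP a (i : ℕ)) = 1 := by
    rw [Fin.sum_univ_eq_sum_range (fun n => pP a (n + 1) - pP a n) k,
      Finset.sum_range_sub (fun n => pP a n) k, pP_zero, pP_k a ha]
    ring
  have hlt1 : ∀ i : Fin k, pP a ((i : ℕ) + 1) - pP a (i : ℕ) < 1 := by
    intro i
    obtain ⟨i', hne⟩ : ∃ i' : Fin k, i ≠ i' := by
      rcases Nat.eq_zero_or_pos (i : ℕ) with h | h
      · exact ⟨⟨1, by omega⟩, by intro hcon; rw [Fin.ext_iff] at hcon; simp at hcon; omega⟩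
      · exact ⟨⟨0, by omega⟩, by intro hcon; rw [Fin.ext_iff] at hcon; simp at hcon; omega⟩
    have hsub : (∑ x ∈ ({i, i'} : Finset (Fin k)),
        (pP a ((x : ℕ) + 1) - pP a (x : ℕ))) ≤ 1 := by
      rw [← hsum]
      exact Finset.sum_le_sum_of_subset_of_nonneg (Finset.subset_univ _)
        (fun x _ _ => (hpos x).le)
    rw [Finset.sum_pair hne] at hsub
    linarith [hpos i']
  calc ∑ i : Fin k, (pP a ((i : ℕ) + 1) - pP a (i : ℕ)) ^ 2
      < ∑ i : Fin k, (pP a ((i : ℕ) + 1) - pP a (i : ℕ)) := by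
        apply Finset.sum_lt_sum_of_nonempty
        · have : Nonempty (Fin k) := ⟨⟨0, by omega⟩⟩
          exact Finset.univ_nonempty
        · intro i _
          have h1 := hpos i
          have h2 := hlt1 i
          nlinarith
    _ = 1 := hsum

lemma sum_dq_sq_lt_one (a : Fin k → Fin ℓ → ℝ) (ha : IsTransfMatrix a) (hℓ : 2 ≤ ℓ) :
    ∑ j : Fin ℓ, (qQ a ((j : ℕ) + 1) - qQ a (j : ℕ)) ^ 2 < 1 := by
  have := sum_dp_sq_lt_one (fun j i => a i j) (transpose_istm a ha) hℓ
  simpa [← qQ_eq_pP_transpose] using this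

end SobEq

section Final
variable {k ℓ : ℕ} {a : Fin k → Fin ℓ → ℝ}

lemma dP_eq (i : Fin k) : pP a ((i : ℕ) + 1) - pP a (i : ℕ) = ∑ j, a i j := by
  rw [pP_succ]; ring

lemma dQ_eq (j : Fin ℓ) : qQ a ((j : ℕ) + 1) - qQ a (j : ℕ) = ∑ i, a i j := by
  rw [qQ_succ]; ring

lemma S1_lt_one (ha : IsTransfMatrix a) (hk : 2 ≤ k) (hℓ : 2 ≤ ℓ) :
    (∑ j : Fin ℓ, ∑ i : Fin k, (a i j) ^ 2 *
      (qQ a ((j : ℕ) + 1) - qQ a (j : ℕ)) / (pP a ((i : ℕ) + 1) - pP a (i : ℕ))) < 1 := by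
  have hstep : (∑ j : Fin ℓ, ∑ i : Fin k, (a i j) ^ 2 *
      (qQ a ((j : ℕ) + 1) - qQ a (j : ℕ)) / (pP a ((i : ℕ) + 1) - pP a (i : ℕ))) ≤
      ∑ j : Fin ℓ, (qQ a ((j : ℕ) + 1) - qQ a (j : ℕ)) ^ 2 := by
    apply Finset.sum_le_sum
    intro j _
    have hq : 0 < qQ a ((j : ℕ) + 1) - qQ a (j : ℕ) := dQ_pos ha j
    have h1 : (∑ i : Fin k, (a i j) ^ 2 *
        (qQ a ((j : ℕ) + 1) - qQ a (j : ℕ)) / (pP a ((i : ℕ) + 1) - pP a (i : ℕ))) ≤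
        ∑ i : Fin k, a i j * (qQ a ((j : ℕ) + 1) - qQ a (j : ℕ)) := by
      apply Finset.sum_le_sum
      intro i _
      have hp : 0 < pP a ((i : ℕ) + 1) - pP a (i : ℕ) := dP_pos a ha i
      have haij : a i j ≤ pP a ((i : ℕ) + 1) - pP a (i : ℕ) := by
        rw [dP_eq]
        exact Finset.single_le_sum (fun j' _ => ha.1 i j') (Finset.mem_univ j)
      rw [div_le_iff₀ hp]
      nlinarith [mul_nonneg (mul_nonneg (ha.1 i j) hq.le) (sub_nonneg.2 haij)]
    calc (∑ i : Fin k, (a i j) ^ 2 *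
        (qQ a ((j : ℕ) + 1) - qQ a (j : ℕ)) / (pP a ((i : ℕ) + 1) - pP a (i : ℕ)))
        ≤ ∑ i : Fin k, a i j * (qQ a ((j : ℕ) + 1) - qQ a (j : ℕ)) := h1
      _ = (∑ i : Fin k, a i j) * (qQ a ((j : ℕ) + 1) - qQ a (j : ℕ)) := by
          rw [Finset.sum_mul]
      _ = (qQ a ((j : ℕ) + 1) - qQ a (j : ℕ)) ^ 2 := by rw [← dQ_eq]; ring
  exact lt_of_le_of_lt hstep (sum_dq_sq_lt_one a ha hℓ)

lemma S2_lt_one (ha : IsTransfMatrix a) (hk : 2 ≤ k) (hℓ : 2 ≤ ℓ) :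
    (∑ j : Fin ℓ, ∑ i : Fin k, (a i j) ^ 2 *
      (pP a ((i : ℕ) + 1) - pP a (i : ℕ)) / (qQ a ((j : ℕ) + 1) - qQ a (j : ℕ))) < 1 := by
  have hstep : (∑ j : Fin ℓ, ∑ i : Fin k, (a i j) ^ 2 *
      (pP a ((i : ℕ) + 1) - pP a (i : ℕ)) / (qQ a ((j : ℕ) + 1) - qQ a (j : ℕ))) ≤
      ∑ i : Fin k, (pP a ((i : ℕ) + 1) - pP a (i : ℕ)) ^ 2 := by
    have h1 : (∑ j : Fin ℓ, ∑ i : Fin k, (a i j) ^ 2 *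
        (pP a ((i : ℕ) + 1) - pP a (i : ℕ)) / (qQ a ((j : ℕ) + 1) - qQ a (j : ℕ))) ≤
        ∑ j : Fin ℓ, ∑ i : Fin k, a i j * (pP a ((i : ℕ) + 1) - pP a (i : ℕ)) := by
      apply Finset.sum_le_sum
      intro j _
      apply Finset.sum_le_sum
      intro i _
      have hq : 0 < qQ a ((j : ℕ) + 1) - qQ a (j : ℕ) := dQ_pos ha j
      have hp : 0 < pP a ((i : ℕ) + 1) - pP a (i : ℕ) := dP_pos a ha i
      have haij : a i j ≤ qQ a ((j : ℕ) + 1) - qQ a (j : ℕ) := by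
        rw [dQ_eq]
        exact Finset.single_le_sum (fun i' _ => ha.1 i' j) (Finset.mem_univ i)
      rw [div_le_iff₀ hq]
      nlinarith [mul_nonneg (mul_nonneg (ha.1 i j) hp.le) (sub_nonneg.2 haij)]
    calc (∑ j : Fin ℓ, ∑ i : Fin k, (a i j) ^ 2 *
        (pP a ((i : ℕ) + 1) - pP a (i : ℕ)) / (qQ a ((j : ℕ) + 1) - qQ a (j : ℕ)))
        ≤ ∑ j : Fin ℓ, ∑ i : Fin k, a i j * (pP a ((i : ℕ) + 1) - pP a (i : ℕ)) := h1
      _ = ∑ i : Fin k, ∑ j : Fin ℓ, a i j * (pP a ((i : ℕ) + 1) - pP a (i : ℕ)) :=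
          Finset.sum_comm
      _ = ∑ i : Fin k, (pP a ((i : ℕ) + 1) - pP a (i : ℕ)) ^ 2 := by
          apply Finset.sum_congr rfl
          intro i _
          rw [← Finset.sum_mul, ← dP_eq]; ring
  exact lt_of_le_of_lt hstep (sum_dp_sq_lt_one a ha hk)

end Final


/-- Let `A = [a_{ij}]` be a `k × ℓ` transformation matrix with `k, ℓ ≥ 2` and
let `C, D` be copulas.  Then `‖[A](C) − [A](D)‖_S ≤ r ‖C − D‖_S` where
`r² = max(Σ_j Σ_i a_{ij}² Δq_j/Δp_i, Σ_j Σ_i a_{ij}² Δp_i/Δq_j)`, and moreover `r < 1`. -/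
theorem stmt12 {k ℓ : ℕ} (hk : 2 ≤ k) (hℓ : 2 ≤ ℓ)
    (a : Fin k → Fin ℓ → ℝ) (ha : IsTransfMatrix a)
    (C D : ℝ → ℝ → ℝ) (hC : IsCopula C) (hD : IsCopula D) :
    sobNorm (csub (patch a C) (patch a D)) ≤
      Real.sqrt (max
        (∑ j : Fin ℓ, ∑ i : Fin k, (a i j) ^ 2 *
          (qQ a ((j : ℕ) + 1) - qQ a (j : ℕ)) / (pP a ((i : ℕ) + 1) - pP a (i : ℕ)))
        (∑ j : Fin ℓ, ∑ i : Fin k, (a i j) ^ 2 *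
          (pP a ((i : ℕ) + 1) - pP a (i : ℕ)) / (qQ a ((j : ℕ) + 1) - qQ a (j : ℕ)))) *
      sobNorm (csub C D) ∧
    Real.sqrt (max
        (∑ j : Fin ℓ, ∑ i : Fin k, (a i j) ^ 2 *
          (qQ a ((j : ℕ) + 1) - qQ a (j : ℕ)) / (pP a ((i : ℕ) + 1) - pP a (i : ℕ)))
        (∑ j : Fin ℓ, ∑ i : Fin k, (a i j) ^ 2 *
          (pP a ((i : ℕ) + 1) - pP a (i : ℕ)) / (qQ a ((j : ℕ) + 1) - qQ a (j : ℕ)))) < 1 := by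
  set S1 := ∑ j : Fin ℓ, ∑ i : Fin k, (a i j) ^ 2 *
    (qQ a ((j : ℕ) + 1) - qQ a (j : ℕ)) / (pP a ((i : ℕ) + 1) - pP a (i : ℕ)) with hS1
  set S2 := ∑ j : Fin ℓ, ∑ i : Fin k, (a i j) ^ 2 *
    (pP a ((i : ℕ) + 1) - pP a (i : ℕ)) / (qQ a ((j : ℕ) + 1) - qQ a (j : ℕ)) with hS2
  have hσ1 := sobSq1_nonneg (csub C D)
  have hσ2 := sobSq2_nonneg (csub C D)
  have hS1nn : 0 ≤ S1 := by
    rw [hS1]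
    apply Finset.sum_nonneg; intro j _
    apply Finset.sum_nonneg; intro i _
    exact div_nonneg (mul_nonneg (sq_nonneg _) (dQ_pos ha j).le) (dP_pos a ha i).le
  have hS2nn : 0 ≤ S2 := by
    rw [hS2]
    apply Finset.sum_nonneg; intro j _
    apply Finset.sum_nonneg; intro i _
    exact div_nonneg (mul_nonneg (sq_nonneg _) (dP_pos a ha i).le) (dQ_pos ha j).le
  have hmaxnn : 0 ≤ max S1 S2 := le_trans hS1nn (le_max_left _ _)
  constructor
  · unfold sobNorm
    rw [sobSq1_patch ha hC hD, sobSq2_patch ha hC hD, ← hS1, ← hS2]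
    have hle : S1 * sobSq1 (csub C D) + S2 * sobSq2 (csub C D) ≤
        max S1 S2 * (sobSq1 (csub C D) + sobSq2 (csub C D)) := by
      have h1 := mul_le_mul_of_nonneg_right (le_max_left S1 S2) hσ1
      have h2 := mul_le_mul_of_nonneg_right (le_max_right S1 S2) hσ2
      nlinarith
    calc Real.sqrt (S1 * sobSq1 (csub C D) + S2 * sobSq2 (csub C D))
        ≤ Real.sqrt (max S1 S2 * (sobSq1 (csub C D) + sobSq2 (csub C D))) :=
          Real.sqrt_le_sqrt hle
      _ = Real.sqrt (max S1 S2) * Real.sqrt (sobSq1 (csub C D) + sobSq2 (csub C D)) :=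
          Real.sqrt_mul hmaxnn _
  · have hlt : max S1 S2 < 1 := max_lt (S1_lt_one ha hk hℓ) (S2_lt_one ha hk hℓ)
    calc Real.sqrt (max S1 S2) < Real.sqrt 1 := Real.sqrt_lt_sqrt hmaxnn hlt
      _ = 1 := Real.sqrt_one
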